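/- (Progress for pure computations) If ⊢ c : A ! ∅ is derivable for a closed core Eff computation c, then either there exists c' with c ⇝ c', or c is of the form val e for some expression e with ⊢ e : A; in particular, a terminating closed computation of type A ! ∅ returns a value of type A and calls no operations. -/

import Mathlib

namespace CoreEff

/-- Names for effects, instances and operation symbols. -/
structure Sig where
  Effect : Type
  Inst : Type
  Op : Type

/- Pure types and dirty types of core Eff.  A region is a finite set of
instances, a dirt a finite set of operations `ι#op`. -/
mutual
inductive PType (σ : Sig) : Type
  | bool : PType σ
  | nat : PType σ
  | unit : PType σ
  | empty : PType σ
  | fn : PType σ → DType σ → PType σ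
  | eff : σ.Effect → Finset σ.Inst → PType σ
  | hand : DType σ → DType σ → PType σ
inductive DType (σ : Sig) : Type
  | bang : PType σ → Finset (σ.Inst × σ.Op) → DType σ
end

/-- Assignment of effects to instances and operation symbols, and of
parameter/result types to operation symbols (the signatures `Σ_E`). -/
structure OpSig (σ : Sig) where
  instOf : σ.Inst → σ.Effect
  opOf : σ.Op → σ.Effect
  par : σ.Op → PType σ
  res : σ.Op → PType σ

/- Syntax of core Eff, with de Bruijn indices.
In an operation case `e#op x k ↦ c`, the body `c` binds `x` as index 1 and
`k` as index 0.  In `letrec f x = c₁ in c₂`, `c₁` binds `f` as 1 and `x` as 0,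
and `c₂` binds `f` as 0. -/
mutual
inductive Expr (σ : Sig) : Type
  | var : Nat → Expr σ
  | tt : Expr σ
  | ff : Expr σ
  | zero : Expr σ
  | succ : Expr σ → Expr σ
  | unit : Expr σ
  | fn : PType σ → Comp σ → Expr σ
  | inst : σ.Inst → Expr σ
  | handler : PType σ → Comp σ → OpCases σ → Expr σ
inductive OpCases (σ : Sig) : Type
  | nil : DType σ → OpCases σ
  | cons : Expr σ → σ.Op → Comp σ → OpCases σ → OpCases σ
inductive Comp (σ : Sig) : Type
  | ret : Expr σ → Comp σ
  | call : Expr σ → σ.Op → Expr σ → Comp σ → Comp σ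
  | handle : Expr σ → Comp σ → Comp σ
  | ite : Expr σ → Comp σ → Comp σ → Comp σ
  | case : Expr σ → Comp σ → Comp σ → Comp σ
  | absurd : DType σ → Expr σ → Comp σ
  | app : Expr σ → Expr σ → Comp σ
  | letin : Comp σ → Comp σ → Comp σ
  | letrec : PType σ → DType σ → Comp σ → Comp σ → Comp σ
end

/-- Pushing a renaming under one binder. -/
def liftRen (ξ : Nat → Nat) : Nat → Nat
  | 0 => 0
  | n + 1 => ξ n + 1

variable {σ : Sig}

mutual
def renameE (ξ : Nat → Nat) : Expr σ → Expr σ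
  | .var n => .var (ξ n)
  | .tt => .tt
  | .ff => .ff
  | .zero => .zero
  | .succ e => .succ (renameE ξ e)
  | .unit => .unit
  | .fn A c => .fn A (renameC (liftRen ξ) c)
  | .inst ι => .inst ι
  | .handler A cv ocs => .handler A (renameC (liftRen ξ) cv) (renameO ξ ocs)
def renameO (ξ : Nat → Nat) : OpCases σ → OpCases σ
  | .nil C => .nil C
  | .cons e op c ocs =>
      .cons (renameE ξ e) op (renameC (liftRen (liftRen ξ)) c) (renameO ξ ocs)
def renameC (ξ : Nat → Nat) : Comp σ → Comp σ
  | .ret e => .ret (renameE ξ e)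
  | .call e1 op e2 c => .call (renameE ξ e1) op (renameE ξ e2) (renameC (liftRen ξ) c)
  | .handle e c => .handle (renameE ξ e) (renameC ξ c)
  | .ite e c1 c2 => .ite (renameE ξ e) (renameC ξ c1) (renameC ξ c2)
  | .case e c1 c2 => .case (renameE ξ e) (renameC ξ c1) (renameC (liftRen ξ) c2)
  | .absurd C e => .absurd C (renameE ξ e)
  | .app e1 e2 => .app (renameE ξ e1) (renameE ξ e2)
  | .letin c1 c2 => .letin (renameC ξ c1) (renameC (liftRen ξ) c2)
  | .letrec A C c1 c2 =>
      .letrec A C (renameC (liftRen (liftRen ξ)) c1) (renameC (liftRen ξ) c2)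
end

/-- Weakening of an expression by one variable. -/
def shiftE (e : Expr σ) : Expr σ := renameE Nat.succ e

/-- Pushing a substitution under one binder. -/
def liftSub (s : Nat → Expr σ) : Nat → Expr σ
  | 0 => .var 0
  | n + 1 => shiftE (s n)

mutual
def substE (s : Nat → Expr σ) : Expr σ → Expr σ
  | .var n => s n
  | .tt => .tt
  | .ff => .ff
  | .zero => .zero
  | .succ e => .succ (substE s e)
  | .unit => .unit
  | .fn A c => .fn A (substC (liftSub s) c)
  | .inst ι => .inst ι
  | .handler A cv ocs => .handler A (substC (liftSub s) cv) (substO s ocs)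
def substO (s : Nat → Expr σ) : OpCases σ → OpCases σ
  | .nil C => .nil C
  | .cons e op c ocs =>
      .cons (substE s e) op (substC (liftSub (liftSub s)) c) (substO s ocs)
def substC (s : Nat → Expr σ) : Comp σ → Comp σ
  | .ret e => .ret (substE s e)
  | .call e1 op e2 c => .call (substE s e1) op (substE s e2) (substC (liftSub s) c)
  | .handle e c => .handle (substE s e) (substC s c)
  | .ite e c1 c2 => .ite (substE s e) (substC s c1) (substC s c2)
  | .case e c1 c2 => .case (substE s e) (substC s c1) (substC (liftSub s) c2)
  | .absurd C e => .absurd C (substE s e)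
  | .app e1 e2 => .app (substE s e1) (substE s e2)
  | .letin c1 c2 => .letin (substC s c1) (substC (liftSub s) c2)
  | .letrec A C c1 c2 =>
      .letrec A C (substC (liftSub (liftSub s)) c1) (substC (liftSub s) c2)
end

/-- Substituting an expression for the last-bound variable. -/
def sub1 (e : Expr σ) : Nat → Expr σ
  | 0 => e
  | n + 1 => .var n

/-- Substituting for the two last-bound variables (index 1 gets `e1`, index 0 gets `e0`). -/
def sub2 (e1 e0 : Expr σ) : Nat → Expr σ
  | 0 => e0
  | 1 => e1
  | n + 2 => .var n

def subst0E (e : Expr σ) (e' : Expr σ) : Expr σ := substE (sub1 e) e'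
def subst0C (e : Expr σ) (c : Comp σ) : Comp σ := substC (sub1 e) c
def subst2C (e1 e0 : Expr σ) (c : Comp σ) : Comp σ := substC (sub2 e1 e0) c

/-- Swap of the two last-bound variables. -/
def swap01 : Nat → Nat
  | 0 => 1
  | 1 => 0
  | n + 2 => n + 2

/-- The unfolding `fun x ↦ let rec f x = c₁ in c₁` of a recursive definition. -/
def recUnfold (A : PType σ) (C : DType σ) (c1 : Comp σ) : Expr σ :=
  .fn A (.letrec A C (renameC (liftRen (liftRen Nat.succ)) c1) (renameC swap01 c1))

/-- `Dispatch ocs ι op e κ c` means `c = ocs_{ι#op}(e, κ)`: the first operation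
case of `ocs` matching `ι#op` is selected (substituting `e` for the parameter
and `κ` for the continuation) and the call is re-raised, with continuation
`(y. κ y)`, if no case matches. -/
inductive Dispatch : OpCases σ → σ.Inst → σ.Op → Expr σ → Expr σ → Comp σ → Prop
  | nil {C ι op e κ} :
      Dispatch (.nil C) ι op e κ (.call (.inst ι) op e (.app (shiftE κ) (.var 0)))
  | found {ι op c ocs e κ} :
      Dispatch (.cons (.inst ι) op c ocs) ι op e κ (subst2C e κ c)
  | skip {e' op' c ocs ι op e κ c'} :
      (Expr.inst ι ≠ e' ∨ op ≠ op') →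
      Dispatch ocs ι op e κ c' →
      Dispatch (.cons e' op' c ocs) ι op e κ c'

/-- Small-step operational semantics `c ⇝ c'` of core Eff. -/
inductive Step (Ω : OpSig σ) : Comp σ → Comp σ → Prop
  | iteTrue {c1 c2} : Step Ω (.ite .tt c1 c2) c1
  | iteFalse {c1 c2} : Step Ω (.ite .ff c1 c2) c2
  | caseZero {c1 c2} : Step Ω (.case .zero c1 c2) c1
  | caseSucc {e c1 c2} : Step Ω (.case (.succ e) c1 c2) (subst0C e c2)
  | app {A c e} : Step Ω (.app (.fn A c) e) (subst0C e c)
  | letCong {c1 c1' c2} : Step Ω c1 c1' → Step Ω (.letin c1 c2) (.letin c1' c2)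
  | letVal {e c2} : Step Ω (.letin (.ret e) c2) (subst0C e c2)
  | letOp {ι op e c1 c2} :
      Step Ω (.letin (.call (.inst ι) op e c1) c2)
        (.call (.inst ι) op e (.letin c1 (renameC (liftRen Nat.succ) c2)))
  | letrec {A C c1 c2} : Step Ω (.letrec A C c1 c2) (subst0C (recUnfold A C c1) c2)
  | handleCong {h c c'} : Step Ω c c' → Step Ω (.handle h c) (.handle h c')
  | handleVal {A cv ocs e} :
      Step Ω (.handle (.handler A cv ocs) (.ret e)) (subst0C e cv)
  | handleOp {A cv ocs ι op e c c'} :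
      Dispatch ocs ι op e
        (.fn (Ω.res op) (.handle (shiftE (.handler A cv ocs)) c)) c' →
      Step Ω (.handle (.handler A cv ocs) (.call (.inst ι) op e c)) c'

/-- Big-step operational semantics `c ⇓ r` of core Eff; results are `val e`
and operation calls `ι#op e (y.c)`. -/
inductive Big (Ω : OpSig σ) : Comp σ → Comp σ → Prop
  | ret {e} : Big Ω (.ret e) (.ret e)
  | call {ι op e c} : Big Ω (.call (.inst ι) op e c) (.call (.inst ι) op e c)
  | iteTrue {c1 c2 r} : Big Ω c1 r → Big Ω (.ite .tt c1 c2) r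
  | iteFalse {c1 c2 r} : Big Ω c2 r → Big Ω (.ite .ff c1 c2) r
  | caseZero {c1 c2 r} : Big Ω c1 r → Big Ω (.case .zero c1 c2) r
  | caseSucc {e c1 c2 r} : Big Ω (subst0C e c2) r → Big Ω (.case (.succ e) c1 c2) r
  | app {A c e r} : Big Ω (subst0C e c) r → Big Ω (.app (.fn A c) e) r
  | letVal {c1 c2 e r} : Big Ω c1 (.ret e) → Big Ω (subst0C e c2) r →
      Big Ω (.letin c1 c2) r
  | letOp {c1 c2 ι op e c} : Big Ω c1 (.call (.inst ι) op e c) →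
      Big Ω (.letin c1 c2)
        (.call (.inst ι) op e (.letin c (renameC (liftRen Nat.succ) c2)))
  | letrec {A C c1 c2 r} : Big Ω (subst0C (recUnfold A C c1) c2) r →
      Big Ω (.letrec A C c1 c2) r
  | handleVal {A cv ocs c e r} : Big Ω c (.ret e) → Big Ω (subst0C e cv) r →
      Big Ω (.handle (.handler A cv ocs) c) r
  | handleOp {A cv ocs c ι op e c' c'' r} :
      Big Ω c (.call (.inst ι) op e c') →
      Dispatch ocs ι op e
        (.fn (Ω.res op) (.handle (shiftE (.handler A cv ocs)) c')) c'' →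
      Big Ω c'' r →
      Big Ω (.handle (.handler A cv ocs) c) r

/-- `c ⇝* r`: iterated small steps ending in a result. -/
inductive StarStep (Ω : OpSig σ) : Comp σ → Comp σ → Prop
  | ret {e} : StarStep Ω (.ret e) (.ret e)
  | call {ι op e c} : StarStep Ω (.call (.inst ι) op e c) (.call (.inst ι) op e c)
  | step {c c' r} : Step Ω c c' → StarStep Ω c' r → StarStep Ω c r

/- Structural subtyping of pure and dirty types. -/
mutual
inductive SubP (σ : Sig) : PType σ → PType σ → Prop
  | bool : SubP σ .bool .bool
  | nat : SubP σ .nat .nat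
  | unit : SubP σ .unit .unit
  | empty : SubP σ .empty .empty
  | fn {A A' C C'} : SubP σ A' A → SubD σ C C' → SubP σ (.fn A C) (.fn A' C')
  | eff {E R R'} : R ⊆ R' → SubP σ (.eff E R) (.eff E R')
  | hand {C C' D D'} : SubD σ C' C → SubD σ D D' → SubP σ (.hand C D) (.hand C' D')
inductive SubD (σ : Sig) : DType σ → DType σ → Prop
  | bang {A A' Δ Δ'} : SubP σ A A' → Δ ⊆ Δ' → SubD σ (.bang A Δ) (.bang A' Δ')
end

/- The effect system of core Eff: typing of expressions, operation cases
(`Γ ⊢ ocs : C / Δ`) and computations, with subsumption. -/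
mutual
inductive HasTypeE (σ : Sig) (Ω : OpSig σ) [DecidableEq σ.Inst] [DecidableEq σ.Op] :
    List (PType σ) → Expr σ → PType σ → Prop
  | var {Γ n A} : Γ[n]? = some A → HasTypeE σ Ω Γ (.var n) A
  | tt {Γ} : HasTypeE σ Ω Γ .tt .bool
  | ff {Γ} : HasTypeE σ Ω Γ .ff .bool
  | zero {Γ} : HasTypeE σ Ω Γ .zero .nat
  | succ {Γ e} : HasTypeE σ Ω Γ e .nat → HasTypeE σ Ω Γ (.succ e) .nat
  | unit {Γ} : HasTypeE σ Ω Γ .unit .unit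
  | fn {Γ A c C} : HasTypeC σ Ω (A :: Γ) c C → HasTypeE σ Ω Γ (.fn A c) (.fn A C)
  | inst {Γ ι E R} : ι ∈ R → (∀ κ ∈ R, Ω.instOf κ = E) →
      HasTypeE σ Ω Γ (.inst ι) (.eff E R)
  | handler {Γ A cv ocs B Δ Δ' Δ''} :
      HasTypeC σ Ω (A :: Γ) cv (.bang B Δ') →
      HasTypeO σ Ω Γ ocs (.bang B Δ') Δ'' →
      Δ ⊆ Δ'' ∪ Δ' →
      HasTypeE σ Ω Γ (.handler A cv ocs) (.hand (.bang A Δ) (.bang B Δ'))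
  | sub {Γ e A A'} : HasTypeE σ Ω Γ e A → SubP σ A A' → HasTypeE σ Ω Γ e A'
inductive HasTypeO (σ : Sig) (Ω : OpSig σ) [DecidableEq σ.Inst] [DecidableEq σ.Op] :
    List (PType σ) → OpCases σ → DType σ → Finset (σ.Inst × σ.Op) → Prop
  | nil {Γ C} : HasTypeO σ Ω Γ (.nil C) C ∅
  | cons {Γ e op c ocs E R C Δ Δ'} :
      HasTypeE σ Ω Γ e (.eff E R) →
      Ω.opOf op = E →
      HasTypeC σ Ω (.fn (Ω.res op) C :: Ω.par op :: Γ) c C →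
      HasTypeO σ Ω Γ ocs C Δ' →
      (∀ ι, R = {ι} → Δ ⊆ insert (ι, op) Δ') →
      ((¬ ∃ ι, R = {ι}) → Δ ⊆ Δ') →
      HasTypeO σ Ω Γ (.cons e op c ocs) C Δ
inductive HasTypeC (σ : Sig) (Ω : OpSig σ) [DecidableEq σ.Inst] [DecidableEq σ.Op] :
    List (PType σ) → Comp σ → DType σ → Prop
  | ret {Γ e A Δ} : HasTypeE σ Ω Γ e A → HasTypeC σ Ω Γ (.ret e) (.bang A Δ)
  | call {Γ e1 op e2 c E R A Δ} :
      HasTypeE σ Ω Γ e1 (.eff E R) →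
      Ω.opOf op = E →
      HasTypeE σ Ω Γ e2 (Ω.par op) →
      HasTypeC σ Ω (Ω.res op :: Γ) c (.bang A Δ) →
      (∀ ι ∈ R, (ι, op) ∈ Δ) →
      HasTypeC σ Ω Γ (.call e1 op e2 c) (.bang A Δ)
  | handle {Γ e c C D} : HasTypeE σ Ω Γ e (.hand C D) → HasTypeC σ Ω Γ c C →
      HasTypeC σ Ω Γ (.handle e c) D
  | ite {Γ e c1 c2 C} : HasTypeE σ Ω Γ e .bool → HasTypeC σ Ω Γ c1 C →
      HasTypeC σ Ω Γ c2 C → HasTypeC σ Ω Γ (.ite e c1 c2) C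
  | case {Γ e c1 c2 C} : HasTypeE σ Ω Γ e .nat → HasTypeC σ Ω Γ c1 C →
      HasTypeC σ Ω (.nat :: Γ) c2 C → HasTypeC σ Ω Γ (.case e c1 c2) C
  | absurd {Γ e C} : HasTypeE σ Ω Γ e .empty → HasTypeC σ Ω Γ (.absurd C e) C
  | app {Γ e1 e2 A C} : HasTypeE σ Ω Γ e1 (.fn A C) → HasTypeE σ Ω Γ e2 A →
      HasTypeC σ Ω Γ (.app e1 e2) C
  | letin {Γ c1 c2 A B Δ} : HasTypeC σ Ω Γ c1 (.bang A Δ) →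
      HasTypeC σ Ω (A :: Γ) c2 (.bang B Δ) →
      HasTypeC σ Ω Γ (.letin c1 c2) (.bang B Δ)
  | letrec {Γ A C c1 c2 D} :
      HasTypeC σ Ω (A :: .fn A C :: Γ) c1 C →
      HasTypeC σ Ω (.fn A C :: Γ) c2 D →
      HasTypeC σ Ω Γ (.letrec A C c1 c2) D
  | sub {Γ c C C'} : HasTypeC σ Ω Γ c C → SubD σ C C' → HasTypeC σ Ω Γ c C'
end

/-- Skeletal types: pure/dirty types with all effect information erased. -/
inductive SType (σ : Sig) : Type
  | bool : SType σ
  | nat : SType σ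
  | unit : SType σ
  | empty : SType σ
  | fn : SType σ → SType σ → SType σ
  | eff : σ.Effect → SType σ
  | hand : SType σ → SType σ → SType σ

/- Skeletal erasure of pure and dirty types. -/
mutual
def skelP : PType σ → SType σ
  | .bool => .bool
  | .nat => .nat
  | .unit => .unit
  | .empty => .empty
  | .fn A C => .fn (skelP A) (skelD C)
  | .eff E _ => .eff E
  | .hand C D => .hand (skelD C) (skelD D)
def skelD : DType σ → SType σ
  | .bang A _ => skelP A
end

/- The skeletal type system: the rules of core Eff with all effect
information erased and without subsumption. -/
mutual
inductive SHasTypeE (σ : Sig) (Ω : OpSig σ) :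
    List (SType σ) → Expr σ → SType σ → Prop
  | var {Γ n S} : Γ[n]? = some S → SHasTypeE σ Ω Γ (.var n) S
  | tt {Γ} : SHasTypeE σ Ω Γ .tt .bool
  | ff {Γ} : SHasTypeE σ Ω Γ .ff .bool
  | zero {Γ} : SHasTypeE σ Ω Γ .zero .nat
  | succ {Γ e} : SHasTypeE σ Ω Γ e .nat → SHasTypeE σ Ω Γ (.succ e) .nat
  | unit {Γ} : SHasTypeE σ Ω Γ .unit .unit
  | fn {Γ A c T} : SHasTypeC σ Ω (skelP A :: Γ) c T →
      SHasTypeE σ Ω Γ (.fn A c) (.fn (skelP A) T)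
  | inst {Γ ι} : SHasTypeE σ Ω Γ (.inst ι) (.eff (Ω.instOf ι))
  | handler {Γ A cv ocs T} :
      SHasTypeC σ Ω (skelP A :: Γ) cv T →
      SHasTypeO σ Ω Γ ocs T →
      SHasTypeE σ Ω Γ (.handler A cv ocs) (.hand (skelP A) T)
inductive SHasTypeO (σ : Sig) (Ω : OpSig σ) :
    List (SType σ) → OpCases σ → SType σ → Prop
  | nil {Γ C} : SHasTypeO σ Ω Γ (.nil C) (skelD C)
  | cons {Γ e op c ocs T} :
      SHasTypeE σ Ω Γ e (.eff (Ω.opOf op)) →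
      SHasTypeC σ Ω (.fn (skelP (Ω.res op)) T :: skelP (Ω.par op) :: Γ) c T →
      SHasTypeO σ Ω Γ ocs T →
      SHasTypeO σ Ω Γ (.cons e op c ocs) T
inductive SHasTypeC (σ : Sig) (Ω : OpSig σ) :
    List (SType σ) → Comp σ → SType σ → Prop
  | ret {Γ e S} : SHasTypeE σ Ω Γ e S → SHasTypeC σ Ω Γ (.ret e) S
  | call {Γ e1 op e2 c T} :
      SHasTypeE σ Ω Γ e1 (.eff (Ω.opOf op)) →
      SHasTypeE σ Ω Γ e2 (skelP (Ω.par op)) →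
      SHasTypeC σ Ω (skelP (Ω.res op) :: Γ) c T →
      SHasTypeC σ Ω Γ (.call e1 op e2 c) T
  | handle {Γ e c S T} : SHasTypeE σ Ω Γ e (.hand S T) → SHasTypeC σ Ω Γ c S →
      SHasTypeC σ Ω Γ (.handle e c) T
  | ite {Γ e c1 c2 T} : SHasTypeE σ Ω Γ e .bool → SHasTypeC σ Ω Γ c1 T →
      SHasTypeC σ Ω Γ c2 T → SHasTypeC σ Ω Γ (.ite e c1 c2) T
  | case {Γ e c1 c2 T} : SHasTypeE σ Ω Γ e .nat → SHasTypeC σ Ω Γ c1 T →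
      SHasTypeC σ Ω (.nat :: Γ) c2 T → SHasTypeC σ Ω Γ (.case e c1 c2) T
  | absurd {Γ e C} : SHasTypeE σ Ω Γ e .empty → SHasTypeC σ Ω Γ (.absurd C e) (skelD C)
  | app {Γ e1 e2 S T} : SHasTypeE σ Ω Γ e1 (.fn S T) → SHasTypeE σ Ω Γ e2 S →
      SHasTypeC σ Ω Γ (.app e1 e2) T
  | letin {Γ c1 c2 S T} : SHasTypeC σ Ω Γ c1 S → SHasTypeC σ Ω (S :: Γ) c2 T →
      SHasTypeC σ Ω Γ (.letin c1 c2) T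
  | letrec {Γ A C c1 c2 T} :
      SHasTypeC σ Ω (skelP A :: .fn (skelP A) (skelD C) :: Γ) c1 (skelD C) →
      SHasTypeC σ Ω (.fn (skelP A) (skelD C) :: Γ) c2 T →
      SHasTypeC σ Ω Γ (.letrec A C c1 c2) T
end

end CoreEff

namespace CoreEff
variable {σ : Sig}

mutual
def SubP.refl : ∀ (A : PType σ), SubP σ A A
  | .bool => .bool
  | .nat => .nat
  | .unit => .unit
  | .empty => .empty
  | .fn A C => .fn (SubP.refl A) (SubD.refl C)
  | .eff _ R => .eff (le_refl R)
  | .hand C D => .hand (SubD.refl C) (SubD.refl D)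
def SubD.refl : ∀ (C : DType σ), SubD σ C C
  | .bang A Δ => .bang (SubP.refl A) (le_refl Δ)
end

mutual
def SubP.trans : ∀ {A B C : PType σ}, SubP σ A B → SubP σ B C → SubP σ A C
  | _, _, _, .bool, .bool => .bool
  | _, _, _, .nat, .nat => .nat
  | _, _, _, .unit, .unit => .unit
  | _, _, _, .empty, .empty => .empty
  | _, _, _, .fn h1 h2, .fn h3 h4 => .fn (SubP.trans h3 h1) (SubD.trans h2 h4)
  | _, _, _, .eff h1, .eff h2 => .eff (h1.trans h2)
  | _, _, _, .hand h1 h2, .hand h3 h4 => .hand (SubD.trans h3 h1) (SubD.trans h2 h4)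
def SubD.trans : ∀ {A B C : DType σ}, SubD σ A B → SubD σ B C → SubD σ A C
  | _, _, _, .bang h1 h2, .bang h3 h4 => .bang (SubP.trans h1 h3) (h2.trans h4)
end

section Inv
variable (Ω : OpSig σ) [DecidableEq σ.Inst] [DecidableEq σ.Op]

/-- Generation predicate for expressions. -/
def InvE (Γ : List (PType σ)) : Expr σ → PType σ → Prop
  | .var n, A => ∃ A₀, Γ[n]? = some A₀ ∧ SubP σ A₀ A
  | .tt, A => SubP σ .bool A
  | .ff, A => SubP σ .bool A
  | .zero, A => SubP σ .nat A
  | .succ e, A => HasTypeE σ Ω Γ e .nat ∧ SubP σ .nat A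
  | .unit, A => SubP σ .unit A
  | .fn A₀ c, A => ∃ C, HasTypeC σ Ω (A₀ :: Γ) c C ∧ SubP σ (.fn A₀ C) A
  | .inst ι, A => ∃ E R, ι ∈ R ∧ (∀ κ ∈ R, Ω.instOf κ = E) ∧ SubP σ (.eff E R) A
  | .handler A₀ cv ocs, A => ∃ B Δ Δ' Δ'',
      HasTypeC σ Ω (A₀ :: Γ) cv (.bang B Δ') ∧ HasTypeO σ Ω Γ ocs (.bang B Δ') Δ'' ∧
      Δ ⊆ Δ'' ∪ Δ' ∧ SubP σ (.hand (.bang A₀ Δ) (.bang B Δ')) A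

/-- Generation predicate for computations (subsumption absorbed). -/
def InvC (Γ : List (PType σ)) : Comp σ → DType σ → Prop
  | .ret e, .bang A _ => HasTypeE σ Ω Γ e A ∧ InvE Ω Γ e A
  | .call e1 op e2 c, .bang A Δ => ∃ E R, HasTypeE σ Ω Γ e1 (.eff E R) ∧ Ω.opOf op = E ∧
      HasTypeE σ Ω Γ e2 (Ω.par op) ∧ HasTypeC σ Ω (Ω.res op :: Γ) c (.bang A Δ) ∧
      ∀ ι ∈ R, (ι, op) ∈ Δ
  | .handle e c, D => ∃ C, HasTypeE σ Ω Γ e (.hand C D) ∧ HasTypeC σ Ω Γ c C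
  | .ite e c1 c2, C => HasTypeE σ Ω Γ e .bool ∧ HasTypeC σ Ω Γ c1 C ∧ HasTypeC σ Ω Γ c2 C
  | .case e c1 c2, C => HasTypeE σ Ω Γ e .nat ∧ HasTypeC σ Ω Γ c1 C ∧
      HasTypeC σ Ω (.nat :: Γ) c2 C
  | .absurd _ e, _ => HasTypeE σ Ω Γ e .empty
  | .app e1 e2, C => ∃ A, HasTypeE σ Ω Γ e1 (.fn A C) ∧ HasTypeE σ Ω Γ e2 A
  | .letin c1 c2, .bang B Δ => ∃ A, HasTypeC σ Ω Γ c1 (.bang A Δ) ∧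
      HasTypeC σ Ω (A :: Γ) c2 (.bang B Δ)
  | .letrec A C c1 c2, D => HasTypeC σ Ω (A :: .fn A C :: Γ) c1 C ∧
      HasTypeC σ Ω (.fn A C :: Γ) c2 D

theorem invE_sub {Γ e A A'} (h : InvE Ω Γ e A) (hs : SubP σ A A') : InvE Ω Γ e A' := by
  cases e <;> simp only [InvE] at h ⊢
  case var => obtain ⟨A₀, h1, h2⟩ := h; exact ⟨A₀, h1, h2.trans hs⟩
  case tt => exact h.trans hs
  case ff => exact h.trans hs
  case zero => exact h.trans hs
  case succ => exact ⟨h.1, h.2.trans hs⟩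
  case unit => exact h.trans hs
  case fn => obtain ⟨C, h1, h2⟩ := h; exact ⟨C, h1, h2.trans hs⟩
  case inst => obtain ⟨E, R, h1, h2, h3⟩ := h; exact ⟨E, R, h1, h2, h3.trans hs⟩
  case handler =>
    obtain ⟨B, Δ, Δ', Δ'', h1, h2, h3, h4⟩ := h
    exact ⟨B, Δ, Δ', Δ'', h1, h2, h3, h4.trans hs⟩

theorem invC_sub {Γ c C C'} (h : InvC Ω Γ c C) (hs : SubD σ C C') : InvC Ω Γ c C' := by
  obtain ⟨A, Δ⟩ := C
  obtain ⟨A', Δ'⟩ := C'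
  obtain ⟨hsA, hsΔ⟩ : SubP σ A A' ∧ Δ ⊆ Δ' := by cases hs with | bang h1 h2 => exact ⟨h1, h2⟩
  cases c <;> simp only [InvC] at h ⊢
  case ret => exact ⟨h.1.sub hsA, invE_sub Ω h.2 hsA⟩
  case call =>
    obtain ⟨E, R, h1, h2, h3, h4, h5⟩ := h
    exact ⟨E, R, h1, h2, h3, h4.sub (.bang hsA hsΔ), fun ι hι => hsΔ (h5 ι hι)⟩
  case handle =>
    obtain ⟨C, h1, h2⟩ := h
    exact ⟨C, h1.sub (.hand (SubD.refl _) (.bang hsA hsΔ)), h2⟩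
  case ite =>
    exact ⟨h.1, h.2.1.sub (.bang hsA hsΔ), h.2.2.sub (.bang hsA hsΔ)⟩
  case case =>
    exact ⟨h.1, h.2.1.sub (.bang hsA hsΔ), h.2.2.sub (.bang hsA hsΔ)⟩
  case absurd => exact h
  case app =>
    obtain ⟨B, h1, h2⟩ := h
    exact ⟨B, h1.sub (.fn (SubP.refl _) (.bang hsA hsΔ)), h2⟩
  case letin =>
    obtain ⟨B, h1, h2⟩ := h
    exact ⟨B, h1.sub (.bang (SubP.refl _) hsΔ), h2.sub (.bang hsA hsΔ)⟩
  case letrec =>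
    exact ⟨h.1, h.2.sub (.bang hsA hsΔ)⟩

theorem invC_of {Γ c C} (h : HasTypeC σ Ω Γ c C) : InvC Ω Γ c C := by
  refine HasTypeC.rec (σ := σ) (Ω := Ω)
    (motive_1 := fun Γ e A _ => InvE Ω Γ e A)
    (motive_2 := fun _ _ _ _ _ => True)
    (motive_3 := fun Γ c C _ => InvC Ω Γ c C)
    ?_ ?_ ?_ ?_ ?_ ?_ ?_ ?_ ?_ ?_ ?_ ?_ ?_ ?_ ?_ ?_ ?_ ?_ ?_ ?_ ?_ ?_ h
  case refine_1 => intro Γ n A h; exact ⟨A, h, SubP.refl A⟩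
  case refine_2 => intro Γ; exact SubP.refl _
  case refine_3 => intro Γ; exact SubP.refl _
  case refine_4 => intro Γ; exact SubP.refl _
  case refine_5 => intro Γ e h _; exact ⟨h, SubP.refl _⟩
  case refine_6 => intro Γ; exact SubP.refl _
  case refine_7 => intro Γ A c C h _; exact ⟨C, h, SubP.refl _⟩
  case refine_8 => intro Γ ι E R h1 h2; exact ⟨E, R, h1, h2, SubP.refl _⟩
  case refine_9 =>
    intro Γ A cv ocs B Δ Δ' Δ'' h1 h2 h3 _ _
    exact ⟨B, Δ, Δ', Δ'', h1, h2, h3, SubP.refl _⟩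
  case refine_10 => intro Γ e A A' _ hs ih; exact invE_sub Ω ih hs
  case refine_11 => intro Γ C; trivial
  case refine_12 => intros; trivial
  case refine_13 => intro Γ e A Δ h ih; exact ⟨h, ih⟩
  case refine_14 =>
    intro Γ e1 op e2 c E R A Δ h1 h2 h3 h4 h5 _ _ _
    exact ⟨E, R, h1, h2, h3, h4, h5⟩
  case refine_15 => intro Γ e c C D h1 h2 _ _; exact ⟨C, h1, h2⟩
  case refine_16 => intro Γ e c1 c2 C h1 h2 h3 _ _ _; exact ⟨h1, h2, h3⟩
  case refine_17 => intro Γ e c1 c2 C h1 h2 h3 _ _ _; exact ⟨h1, h2, h3⟩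
  case refine_18 => intro Γ e C h _; exact h
  case refine_19 => intro Γ e1 e2 A C h1 h2 _ _; exact ⟨A, h1, h2⟩
  case refine_20 => intro Γ c1 c2 A B Δ h1 h2 _ _; exact ⟨A, h1, h2⟩
  case refine_21 => intro Γ A C c1 c2 D h1 h2 _ _; exact ⟨h1, h2⟩
  case refine_22 => intro Γ c C C' _ hs ih; exact invC_sub Ω ih hs

theorem invE_of {Γ e A} (h : HasTypeE σ Ω Γ e A) : InvE Ω Γ e A :=
  (invC_of Ω (HasTypeC.ret (Δ := (∅ : Finset (σ.Inst × σ.Op))) h)).2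

end Inv
end CoreEff
namespace CoreEff
set_option linter.unusedSectionVars false
variable {σ : Sig} {Ω : OpSig σ} [DecidableEq σ.Inst] [DecidableEq σ.Op]

def RenOK (ξ : Nat → Nat) (Γ Γ' : List (PType σ)) : Prop :=
  ∀ n B, Γ[n]? = some B → Γ'[ξ n]? = some B

theorem liftOK {ξ : Nat → Nat} {Γ Γ' : List (PType σ)} (A : PType σ)
    (hξ : RenOK ξ Γ Γ') : RenOK (liftRen ξ) (A :: Γ) (A :: Γ') := by
  intro n B h
  cases n with
  | zero => exact h
  | succ n => exact hξ n B h

theorem renC {Γ c C} (h : HasTypeC σ Ω Γ c C) :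
    ∀ {Γ' : List (PType σ)} {ξ : Nat → Nat}, RenOK ξ Γ Γ' → HasTypeC σ Ω Γ' (renameC ξ c) C := by
  refine HasTypeC.rec (σ := σ) (Ω := Ω)
    (motive_1 := fun Γ e A _ => ∀ {Γ' : List (PType σ)} {ξ : Nat → Nat},
      RenOK ξ Γ Γ' → HasTypeE σ Ω Γ' (renameE ξ e) A)
    (motive_2 := fun Γ ocs C Δ _ => ∀ {Γ' : List (PType σ)} {ξ : Nat → Nat},
      RenOK ξ Γ Γ' → HasTypeO σ Ω Γ' (renameO ξ ocs) C Δ)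
    (motive_3 := fun Γ c C _ => ∀ {Γ' : List (PType σ)} {ξ : Nat → Nat},
      RenOK ξ Γ Γ' → HasTypeC σ Ω Γ' (renameC ξ c) C)
    ?_ ?_ ?_ ?_ ?_ ?_ ?_ ?_ ?_ ?_ ?_ ?_ ?_ ?_ ?_ ?_ ?_ ?_ ?_ ?_ ?_ ?_ h
  case refine_1 =>
    intro Γ n A h Γ' ξ hξ
    exact .var (hξ n A h)
  case refine_2 => intro Γ Γ' ξ hξ; exact .tt
  case refine_3 => intro Γ Γ' ξ hξ; exact .ff
  case refine_4 => intro Γ Γ' ξ hξ; exact .zero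
  case refine_5 =>
    intro Γ e _ ih Γ' ξ hξ
    exact .succ (ih hξ)
  case refine_6 => intro Γ Γ' ξ hξ; exact .unit
  case refine_7 =>
    intro Γ A c C _ ih Γ' ξ hξ
    exact .fn (ih (liftOK A hξ))
  case refine_8 =>
    intro Γ ι E R h1 h2 Γ' ξ hξ
    exact .inst h1 h2
  case refine_9 =>
    intro Γ A cv ocs B Δ Δ' Δ'' _ _ h3 ih1 ih2 Γ' ξ hξ
    exact .handler (ih1 (liftOK A hξ)) (ih2 hξ) h3
  case refine_10 =>
    intro Γ e A A' _ hs ih Γ' ξ hξ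
    exact .sub (ih hξ) hs
  case refine_11 => intro Γ C Γ' ξ hξ; exact .nil
  case refine_12 =>
    intro Γ e op c ocs E R C Δ Δ' _ h2 _ _ h5 h6 ih1 ih2 ih3 Γ' ξ hξ
    exact .cons (ih1 hξ) h2 (ih2 (liftOK _ (liftOK _ hξ))) (ih3 hξ) h5 h6
  case refine_13 =>
    intro Γ e A Δ _ ih Γ' ξ hξ
    exact .ret (ih hξ)
  case refine_14 =>
    intro Γ e1 op e2 c E R A Δ _ h2 _ _ h5 ih1 ih2 ih3 Γ' ξ hξ
    exact .call (ih1 hξ) h2 (ih2 hξ) (ih3 (liftOK _ hξ)) h5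
  case refine_15 =>
    intro Γ e c C D _ _ ih1 ih2 Γ' ξ hξ
    exact .handle (ih1 hξ) (ih2 hξ)
  case refine_16 =>
    intro Γ e c1 c2 C _ _ _ ih1 ih2 ih3 Γ' ξ hξ
    exact .ite (ih1 hξ) (ih2 hξ) (ih3 hξ)
  case refine_17 =>
    intro Γ e c1 c2 C _ _ _ ih1 ih2 ih3 Γ' ξ hξ
    exact .case (ih1 hξ) (ih2 hξ) (ih3 (liftOK _ hξ))
  case refine_18 =>
    intro Γ e C _ ih Γ' ξ hξ
    exact .absurd (ih hξ)
  case refine_19 =>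
    intro Γ e1 e2 A C _ _ ih1 ih2 Γ' ξ hξ
    exact .app (ih1 hξ) (ih2 hξ)
  case refine_20 =>
    intro Γ c1 c2 A B Δ _ _ ih1 ih2 Γ' ξ hξ
    exact .letin (ih1 hξ) (ih2 (liftOK _ hξ))
  case refine_21 =>
    intro Γ A C c1 c2 D _ _ ih1 ih2 Γ' ξ hξ
    exact .letrec (ih1 (liftOK _ (liftOK _ hξ))) (ih2 (liftOK _ hξ))
  case refine_22 =>
    intro Γ c C C' _ hs ih Γ' ξ hξ
    exact .sub (ih hξ) hs

theorem renE {Γ e A} (h : HasTypeE σ Ω Γ e A) {Γ' : List (PType σ)} {ξ : Nat → Nat}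
    (hξ : RenOK ξ Γ Γ') : HasTypeE σ Ω Γ' (renameE ξ e) A :=
  (invC_of Ω (renC (HasTypeC.ret (Δ := (∅ : Finset (σ.Inst × σ.Op))) h) hξ)).1

theorem shiftE_ty {Γ e A} (B : PType σ) (h : HasTypeE σ Ω Γ e A) :
    HasTypeE σ Ω (B :: Γ) (shiftE e) A :=
  renE h (fun _ _ hn => hn)

def SubOK (s : Nat → Expr σ) (Γ Γ' : List (PType σ)) : Prop :=
  ∀ n B, Γ[n]? = some B → HasTypeE σ Ω Γ' (s n) B

theorem liftSubOK {s : Nat → Expr σ} {Γ Γ' : List (PType σ)} (A : PType σ)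
    (hs : SubOK (Ω := Ω) s Γ Γ') : SubOK (Ω := Ω) (liftSub s) (A :: Γ) (A :: Γ') := by
  intro n B h
  cases n with
  | zero => exact .var h
  | succ n => exact shiftE_ty A (hs n B h)

theorem substC_ty {Γ c C} (h : HasTypeC σ Ω Γ c C) :
    ∀ {Γ' : List (PType σ)} {s : Nat → Expr σ}, SubOK (Ω := Ω) s Γ Γ' →
      HasTypeC σ Ω Γ' (substC s c) C := by
  refine HasTypeC.rec (σ := σ) (Ω := Ω)
    (motive_1 := fun Γ e A _ => ∀ {Γ' : List (PType σ)} {s : Nat → Expr σ},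
      SubOK (Ω := Ω) s Γ Γ' → HasTypeE σ Ω Γ' (substE s e) A)
    (motive_2 := fun Γ ocs C Δ _ => ∀ {Γ' : List (PType σ)} {s : Nat → Expr σ},
      SubOK (Ω := Ω) s Γ Γ' → HasTypeO σ Ω Γ' (substO s ocs) C Δ)
    (motive_3 := fun Γ c C _ => ∀ {Γ' : List (PType σ)} {s : Nat → Expr σ},
      SubOK (Ω := Ω) s Γ Γ' → HasTypeC σ Ω Γ' (substC s c) C)
    ?_ ?_ ?_ ?_ ?_ ?_ ?_ ?_ ?_ ?_ ?_ ?_ ?_ ?_ ?_ ?_ ?_ ?_ ?_ ?_ ?_ ?_ h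
  case refine_1 =>
    intro Γ n A h Γ' s hs
    exact hs n A h
  case refine_2 => intro Γ Γ' s hs; exact .tt
  case refine_3 => intro Γ Γ' s hs; exact .ff
  case refine_4 => intro Γ Γ' s hs; exact .zero
  case refine_5 =>
    intro Γ e _ ih Γ' s hs
    exact .succ (ih hs)
  case refine_6 => intro Γ Γ' s hs; exact .unit
  case refine_7 =>
    intro Γ A c C _ ih Γ' s hs
    exact .fn (ih (liftSubOK A hs))
  case refine_8 =>
    intro Γ ι E R h1 h2 Γ' s hs
    exact .inst h1 h2
  case refine_9 =>
    intro Γ A cv ocs B Δ Δ' Δ'' _ _ h3 ih1 ih2 Γ' s hs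
    exact .handler (ih1 (liftSubOK A hs)) (ih2 hs) h3
  case refine_10 =>
    intro Γ e A A' _ hsub ih Γ' s hs
    exact .sub (ih hs) hsub
  case refine_11 => intro Γ C Γ' s hs; exact .nil
  case refine_12 =>
    intro Γ e op c ocs E R C Δ Δ' _ h2 _ _ h5 h6 ih1 ih2 ih3 Γ' s hs
    exact .cons (ih1 hs) h2 (ih2 (liftSubOK _ (liftSubOK _ hs))) (ih3 hs) h5 h6
  case refine_13 =>
    intro Γ e A Δ _ ih Γ' s hs
    exact .ret (ih hs)
  case refine_14 =>
    intro Γ e1 op e2 c E R A Δ _ h2 _ _ h5 ih1 ih2 ih3 Γ' s hs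
    exact .call (ih1 hs) h2 (ih2 hs) (ih3 (liftSubOK _ hs)) h5
  case refine_15 =>
    intro Γ e c C D _ _ ih1 ih2 Γ' s hs
    exact .handle (ih1 hs) (ih2 hs)
  case refine_16 =>
    intro Γ e c1 c2 C _ _ _ ih1 ih2 ih3 Γ' s hs
    exact .ite (ih1 hs) (ih2 hs) (ih3 hs)
  case refine_17 =>
    intro Γ e c1 c2 C _ _ _ ih1 ih2 ih3 Γ' s hs
    exact .case (ih1 hs) (ih2 hs) (ih3 (liftSubOK _ hs))
  case refine_18 =>
    intro Γ e C _ ih Γ' s hs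
    exact .absurd (ih hs)
  case refine_19 =>
    intro Γ e1 e2 A C _ _ ih1 ih2 Γ' s hs
    exact .app (ih1 hs) (ih2 hs)
  case refine_20 =>
    intro Γ c1 c2 A B Δ _ _ ih1 ih2 Γ' s hs
    exact .letin (ih1 hs) (ih2 (liftSubOK _ hs))
  case refine_21 =>
    intro Γ A C c1 c2 D _ _ ih1 ih2 Γ' s hs
    exact .letrec (ih1 (liftSubOK _ (liftSubOK _ hs))) (ih2 (liftSubOK _ hs))
  case refine_22 =>
    intro Γ c C C' _ hsub ih Γ' s hs
    exact .sub (ih hs) hsub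

theorem subst0C_ty {Γ c C A e} (h : HasTypeC σ Ω (A :: Γ) c C)
    (he : HasTypeE σ Ω Γ e A) : HasTypeC σ Ω Γ (subst0C e c) C := by
  refine substC_ty h ?_
  intro n B hn
  cases n with
  | zero => cases hn; exact he
  | succ n => exact .var hn

theorem subst2C_ty {Γ c C A B e1 e0} (h : HasTypeC σ Ω (B :: A :: Γ) c C)
    (h1 : HasTypeE σ Ω Γ e1 A) (h0 : HasTypeE σ Ω Γ e0 B) :
    HasTypeC σ Ω Γ (subst2C e1 e0 c) C := by
  refine substC_ty h ?_
  intro n D hn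
  match n with
  | 0 => cases hn; exact h0
  | 1 => cases hn; exact h1
  | n + 2 => exact .var hn

end CoreEff
namespace CoreEff
variable {σ : Sig} {Ω : OpSig σ} [DecidableEq σ.Inst] [DecidableEq σ.Op]

theorem canonBool {e} (h : HasTypeE σ Ω [] e .bool) : e = .tt ∨ e = .ff := by
  have hi := invE_of Ω h
  cases e <;> simp only [InvE] at hi
  case var => obtain ⟨A₀, h0, _⟩ := hi; simp at h0
  case tt => left; rfl
  case ff => right; rfl
  case zero => cases hi
  case succ => cases hi.2
  case unit => cases hi
  case fn => obtain ⟨C, _, hs⟩ := hi; cases hs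
  case inst => obtain ⟨E, R, _, _, hs⟩ := hi; cases hs
  case handler => obtain ⟨B, Δ, Δ', Δ'', _, _, _, hs⟩ := hi; cases hs

theorem canonNat {e} (h : HasTypeE σ Ω [] e .nat) :
    e = .zero ∨ ∃ e', e = .succ e' ∧ HasTypeE σ Ω [] e' .nat := by
  have hi := invE_of Ω h
  cases e <;> simp only [InvE] at hi
  case var => obtain ⟨A₀, h0, _⟩ := hi; simp at h0
  case tt => cases hi
  case ff => cases hi
  case zero => left; rfl
  case succ e => exact .inr ⟨e, rfl, hi.1⟩
  case unit => cases hi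
  case fn => obtain ⟨C, _, hs⟩ := hi; cases hs
  case inst => obtain ⟨E, R, _, _, hs⟩ := hi; cases hs
  case handler => obtain ⟨B, Δ, Δ', Δ'', _, _, _, hs⟩ := hi; cases hs

theorem canonEmpty {e} (h : HasTypeE σ Ω [] e .empty) : False := by
  have hi := invE_of Ω h
  cases e <;> simp only [InvE] at hi
  case var => obtain ⟨A₀, h0, _⟩ := hi; simp at h0
  case tt => cases hi
  case ff => cases hi
  case zero => cases hi
  case succ => cases hi.2
  case unit => cases hi
  case fn => obtain ⟨C, _, hs⟩ := hi; cases hs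
  case inst => obtain ⟨E, R, _, _, hs⟩ := hi; cases hs
  case handler => obtain ⟨B, Δ, Δ', Δ'', _, _, _, hs⟩ := hi; cases hs

theorem canonFn {e A C} (h : HasTypeE σ Ω [] e (.fn A C)) :
    ∃ A₀ c, e = .fn A₀ c ∧ HasTypeC σ Ω [A₀] c C ∧ SubP σ A A₀ := by
  have hi := invE_of Ω h
  cases e <;> simp only [InvE] at hi
  case var => obtain ⟨A₀, h0, _⟩ := hi; simp at h0
  case tt => cases hi
  case ff => cases hi
  case zero => cases hi
  case succ => cases hi.2
  case unit => cases hi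
  case fn A₀ c =>
    obtain ⟨C₀, hc, hs⟩ := hi
    cases hs with
    | fn hA hC => exact ⟨A₀, c, rfl, hc.sub hC, hA⟩
  case inst => obtain ⟨E, R, _, _, hs⟩ := hi; cases hs
  case handler => obtain ⟨B, Δ, Δ', Δ'', _, _, _, hs⟩ := hi; cases hs

theorem canonEff {e E R} (h : HasTypeE σ Ω [] e (.eff E R)) :
    ∃ ι, e = .inst ι ∧ ι ∈ R ∧ Ω.instOf ι = E := by
  have hi := invE_of Ω h
  cases e <;> simp only [InvE] at hi
  case var => obtain ⟨A₀, h0, _⟩ := hi; simp at h0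
  case tt => cases hi
  case ff => cases hi
  case zero => cases hi
  case succ => cases hi.2
  case unit => cases hi
  case fn => obtain ⟨C, _, hs⟩ := hi; cases hs
  case inst ι =>
    obtain ⟨E₀, R₀, hι, hall, hs⟩ := hi
    cases hs with
    | eff hR => exact ⟨ι, rfl, hR hι, hall ι hι⟩
  case handler => obtain ⟨B, Δ, Δ', Δ'', _, _, _, hs⟩ := hi; cases hs

theorem canonHand {e C D} (h : HasTypeE σ Ω [] e (.hand C D)) :
    ∃ A cv ocs, e = .handler A cv ocs := by
  have hi := invE_of Ω h
  cases e <;> simp only [InvE] at hi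
  case var => obtain ⟨A₀, h0, _⟩ := hi; simp at h0
  case tt => cases hi
  case ff => cases hi
  case zero => cases hi
  case succ => cases hi.2
  case unit => cases hi
  case fn => obtain ⟨C₀, _, hs⟩ := hi; cases hs
  case inst => obtain ⟨E, R, _, _, hs⟩ := hi; cases hs
  case handler A₀ cv ocs => exact ⟨A₀, cv, ocs, rfl⟩

theorem dispatch_total : ∀ (ocs : OpCases σ) (ι : σ.Inst) (op : σ.Op) (e κ : Expr σ),
    ∃ c', Dispatch ocs ι op e κ c'
  | .nil _, _, _, _, _ => ⟨_, .nil⟩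
  | .cons e' op' c ocs, ι, op, e, κ => by
    by_cases h : Expr.inst ι = e' ∧ op = op'
    · obtain ⟨h1, h2⟩ := h
      subst h1; subst h2
      exact ⟨_, .found⟩
    · obtain ⟨c', hd⟩ := dispatch_total ocs ι op e κ
      exact ⟨c', .skip (not_and_or.mp h) hd⟩

end CoreEff
namespace CoreEff
set_option linter.unusedSectionVars false
variable {σ : Sig} {Ω : OpSig σ} [DecidableEq σ.Inst] [DecidableEq σ.Op]

theorem dispatch_ty {ocs ι op e κ c'}
    (hd : Dispatch ocs ι op e κ c') :
    ∀ {B Δv}, HasTypeE σ Ω [] e (Ω.par op) →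
      HasTypeE σ Ω [] κ (.fn (Ω.res op) (.bang B Δv)) →
      Ω.instOf ι = Ω.opOf op →
      ∀ {Δo}, HasTypeO σ Ω [] ocs (.bang B Δv) Δo → (ι, op) ∈ Δo ∪ Δv →
        HasTypeC σ Ω [] c' (.bang B Δv) := by
  induction hd with
  | @nil C ι op e κ =>
    intro B Δv he hκ hEop Δo hocs hmem
    cases hocs
    simp only [Finset.empty_union] at hmem
    refine HasTypeC.call (E := Ω.opOf op) (R := {ι}) ?_ rfl he ?_ ?_
    · exact .inst (Finset.mem_singleton_self ι)
        (fun κ' hκ' => by rw [Finset.mem_singleton] at hκ'; subst hκ'; exact hEop)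
    · exact .app (shiftE_ty _ hκ) (.var rfl)
    · intro ι' hι'
      rw [Finset.mem_singleton] at hι'; subst hι'; exact hmem
  | found =>
    intro B Δv he hκ hEop Δo hocs hmem
    cases hocs with
    | cons he' hopE hc hocs' cond1 cond2 => exact subst2C_ty hc he hκ
  | @skip e' op' c ocs ι op e κ c' hne hd ih =>
    intro B Δv he hκ hEop Δo hocs hmem
    cases hocs with
    | @cons _ _ _ _ _ E R _ _ Δ' he' hopE hc hocs' cond1 cond2 =>
      refine ih he hκ hEop hocs' ?_
      rw [Finset.mem_union] at hmem ⊢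
      rcases hmem with hmem | hmem
      · left
        by_cases hex : ∃ ι₀, R = {ι₀}
        · obtain ⟨ι₀, rfl⟩ := hex
          have hsub := cond1 ι₀ rfl
          have hmem' := hsub hmem
          rw [Finset.mem_insert] at hmem'
          rcases hmem' with heq | hmem'
          · exfalso
            obtain ⟨ι₁, rfl, hι₁, _⟩ := canonEff he'
            rw [Finset.mem_singleton] at hι₁; subst hι₁
            obtain ⟨h1, h2⟩ := Prod.mk.injEq .. ▸ heq
            · cases heq
              rcases hne with hne | hne
              · exact hne rfl
              · exact hne rfl
          · exact hmem'
        · exact cond2 hex hmem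
      · right; exact hmem

end CoreEff
namespace CoreEff
set_option linter.unusedSectionVars false
variable {σ : Sig} {Ω : OpSig σ} [DecidableEq σ.Inst] [DecidableEq σ.Op]

theorem nilRenOK (Γ' : List (PType σ)) (ξ : Nat → Nat) : RenOK (σ := σ) ξ [] Γ' := by
  intro n B h
  simp at h

theorem preservation {c c'} (hs : Step Ω c c') :
    ∀ {C}, HasTypeC σ Ω [] c C → HasTypeC σ Ω [] c' C := by
  induction hs with
  | iteTrue =>
    intro C h
    have hi := invC_of Ω h; simp only [InvC] at hi
    exact hi.2.1
  | iteFalse =>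
    intro C h
    have hi := invC_of Ω h; simp only [InvC] at hi
    exact hi.2.2
  | caseZero =>
    intro C h
    have hi := invC_of Ω h; simp only [InvC] at hi
    exact hi.2.1
  | caseSucc =>
    intro C h
    have hi := invC_of Ω h; simp only [InvC] at hi
    obtain ⟨he, _, h2⟩ := hi
    have hi' := invE_of Ω he; simp only [InvE] at hi'
    exact subst0C_ty h2 hi'.1
  | app =>
    intro C h
    have hi := invC_of Ω h; simp only [InvC] at hi
    obtain ⟨A₀, h1, h2⟩ := hi
    have hi' := invE_of Ω h1; simp only [InvE] at hi'
    obtain ⟨C₀, hc, hsub⟩ := hi'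
    cases hsub with
    | fn hA hC => exact (subst0C_ty hc (h2.sub hA)).sub hC
  | letCong _ ih =>
    intro C h
    obtain ⟨B, Δ⟩ := C
    have hi := invC_of Ω h; simp only [InvC] at hi
    obtain ⟨A₀, h1, h2⟩ := hi
    exact .letin (ih h1) h2
  | letVal =>
    intro C h
    obtain ⟨B, Δ⟩ := C
    have hi := invC_of Ω h; simp only [InvC] at hi
    obtain ⟨A₀, h1, h2⟩ := hi
    have hi' := invC_of Ω h1; simp only [InvC] at hi'
    exact subst0C_ty h2 hi'.1
  | letOp =>
    intro C h
    obtain ⟨B, Δ⟩ := C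
    have hi := invC_of Ω h; simp only [InvC] at hi
    obtain ⟨A₀, h1, h2⟩ := hi
    have hi' := invC_of Ω h1; simp only [InvC] at hi'
    obtain ⟨E, R, hinst, hop, he, hk, hR⟩ := hi'
    refine .call hinst hop he (.letin hk (renC h2 ?_)) hR
    exact liftOK _ (nilRenOK _ _)
  | @letrec A C0 c1 c2 =>
    intro C h
    have hi := invC_of Ω h; simp only [InvC] at hi
    obtain ⟨h1, h2⟩ := hi
    refine subst0C_ty h2 ?_
    refine HasTypeE.fn (.letrec (renC h1 ?_) (renC h1 ?_))
    · exact liftOK _ (liftOK _ (nilRenOK _ _))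
    · intro n B hn
      match n with
      | 0 => exact hn
      | 1 => exact hn
      | n + 2 => simp at hn
  | handleCong _ ih =>
    intro C h
    have hi := invC_of Ω h; simp only [InvC] at hi
    obtain ⟨C', h1, h2⟩ := hi
    exact .handle h1 (ih h2)
  | handleVal =>
    intro D h
    have hi := invC_of Ω h; simp only [InvC] at hi
    obtain ⟨C', hh, hc⟩ := hi
    have hih := invE_of Ω hh; simp only [InvE] at hih
    obtain ⟨B, Δ, Δ', Δ'', hcv, hocs, hΔ, hsub⟩ := hih
    cases hsub with
    | hand hC hD =>
      have hc' := hc.sub hC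
      have hi' := invC_of Ω hc'; simp only [InvC] at hi'
      exact (subst0C_ty hcv hi'.1).sub hD
  | @handleOp A cv ocs ι op e k c'' hd =>
    intro D h
    have hi := invC_of Ω h; simp only [InvC] at hi
    obtain ⟨C', hh, hc⟩ := hi
    have hih := invE_of Ω hh; simp only [InvE] at hih
    obtain ⟨B, Δh, Δv, Δo, hcv, hocs, hΔ, hsub⟩ := hih
    cases hsub with
    | hand hC hD =>
      have hc' := hc.sub hC
      have hi' := invC_of Ω hc'; simp only [InvC] at hi'
      obtain ⟨E, R, hinst, hopE, he, hk, hR⟩ := hi'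
      have hii := invE_of Ω hinst; simp only [InvE] at hii
      obtain ⟨E₀, R₀, hιR₀, hinstOf, hsub'⟩ := hii
      cases hsub' with
      | eff hRR =>
        have hιR : ι ∈ R := hRR hιR₀
        have hEop : Ω.instOf ι = Ω.opOf op := by rw [hinstOf ι hιR₀, hopE]
        have hκ : HasTypeE σ Ω [] (.fn (Ω.res op) (.handle (shiftE (.handler A cv ocs)) k))
            (.fn (Ω.res op) (.bang B Δv)) :=
          .fn (.handle (shiftE_ty _ (.handler hcv hocs hΔ)) hk)
        have hmem : (ι, op) ∈ Δo ∪ Δv := hΔ (hR ι hιR)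
        exact (dispatch_ty hd he hκ hEop hocs hmem).sub hD

end CoreEff
namespace CoreEff
set_option linter.unusedSectionVars false
variable {σ : Sig} {Ω : OpSig σ} [DecidableEq σ.Inst] [DecidableEq σ.Op]

theorem progressAux : ∀ (c : Comp σ) (A : PType σ) (Δ : Finset (σ.Inst × σ.Op)),
    HasTypeC σ Ω [] c (.bang A Δ) →
    (∃ c', Step Ω c c') ∨ (∃ e, c = .ret e) ∨
      (∃ ι op e k, c = .call (.inst ι) op e k ∧ (ι, op) ∈ Δ)
  | .ret e, _, _, _ => .inr (.inl ⟨e, rfl⟩)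
  | .call e1 op e2 k, A, Δ, h => by
    have hi := invC_of Ω h; simp only [InvC] at hi
    obtain ⟨E, R, h1, _, _, _, hR⟩ := hi
    obtain ⟨ι, rfl, hιR, _⟩ := canonEff h1
    exact .inr (.inr ⟨ι, op, e2, k, rfl, hR ι hιR⟩)
  | .handle e c, A, Δ, h => by
    have hi := invC_of Ω h; simp only [InvC] at hi
    obtain ⟨C', h1, h2⟩ := hi
    obtain ⟨A₀, cv, ocs, rfl⟩ := canonHand h1
    obtain ⟨B₀, Δ₀⟩ := C'
    rcases progressAux c B₀ Δ₀ h2 with ⟨c', hs⟩ | ⟨e', rfl⟩ | ⟨ι, op, e', k, rfl, _⟩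
    · exact .inl ⟨_, .handleCong hs⟩
    · exact .inl ⟨_, .handleVal⟩
    · obtain ⟨c'', hd⟩ := dispatch_total ocs ι op e'
        (.fn (Ω.res op) (.handle (shiftE (.handler A₀ cv ocs)) k))
      exact .inl ⟨c'', .handleOp hd⟩
  | .ite e c1 c2, A, Δ, h => by
    have hi := invC_of Ω h; simp only [InvC] at hi
    rcases canonBool hi.1 with rfl | rfl
    · exact .inl ⟨_, .iteTrue⟩
    · exact .inl ⟨_, .iteFalse⟩
  | .case e c1 c2, A, Δ, h => by
    have hi := invC_of Ω h; simp only [InvC] at hi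
    rcases canonNat hi.1 with rfl | ⟨e', rfl, _⟩
    · exact .inl ⟨_, .caseZero⟩
    · exact .inl ⟨_, .caseSucc⟩
  | .absurd C e, A, Δ, h => by
    have hi := invC_of Ω h; simp only [InvC] at hi
    exact (canonEmpty hi).elim
  | .app e1 e2, A, Δ, h => by
    have hi := invC_of Ω h; simp only [InvC] at hi
    obtain ⟨A₀, h1, _⟩ := hi
    obtain ⟨A₁, c, rfl, _, _⟩ := canonFn h1
    exact .inl ⟨_, .app⟩
  | .letin c1 c2, A, Δ, h => by
    have hi := invC_of Ω h; simp only [InvC] at hi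
    obtain ⟨A₀, h1, h2⟩ := hi
    rcases progressAux c1 A₀ Δ h1 with ⟨c', hs⟩ | ⟨e', rfl⟩ | ⟨ι, op, e', k, rfl, _⟩
    · exact .inl ⟨_, .letCong hs⟩
    · exact .inl ⟨_, .letVal⟩
    · exact .inl ⟨_, .letOp⟩
  | .letrec A₀ C₀ c1 c2, A, Δ, h => .inl ⟨_, .letrec⟩

theorem starAux {c r} (hr : StarStep Ω c r) :
    ∀ {A}, HasTypeC σ Ω [] c (.bang A (∅ : Finset (σ.Inst × σ.Op))) →
      ∃ e, r = .ret e ∧ HasTypeE σ Ω [] e A := by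
  induction hr with
  | ret =>
    intro A h
    have hi := invC_of Ω h; simp only [InvC] at hi
    exact ⟨_, rfl, hi.1⟩
  | call =>
    intro A h
    have hi := invC_of Ω h; simp only [InvC] at hi
    obtain ⟨E, R, h1, _, _, _, hR⟩ := hi
    obtain ⟨ι', heq, hιR, _⟩ := canonEff h1
    exact absurd (hR ι' hιR) (by simp)
  | step hs _ ih =>
    intro A h
    exact ih (preservation hs h)

end CoreEff
namespace CoreEff

theorem progress_pure' {σ : Sig} (Ω : OpSig σ) [DecidableEq σ.Inst] [DecidableEq σ.Op]
    (c : Comp σ) (A : PType σ)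
    (h : HasTypeC σ Ω [] c (.bang A (∅ : Finset (σ.Inst × σ.Op)))) :
    ((∃ c', Step Ω c c') ∨ (∃ e, c = .ret e ∧ HasTypeE σ Ω [] e A)) ∧
    (∀ r, StarStep Ω c r → ∃ e, r = .ret e ∧ HasTypeE σ Ω [] e A) := by
  constructor
  · rcases progressAux c A ∅ h with hs | ⟨e, rfl⟩ | ⟨ι, op, e, k, rfl, hmem⟩
    · exact .inl hs
    · have hi := invC_of Ω h; simp only [InvC] at hi
      exact .inr ⟨e, rfl, hi.1⟩
    · simp at hmem
  · intro r hr
    exact starAux hr h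

end CoreEff
namespace CoreEff

/-- **Progress for pure computations.** If `⊢ c : A ! ∅` for a
closed computation `c`, then either `c` steps or `c = val e` with `⊢ e : A`;
in particular a terminating closed computation of type `A ! ∅` returns a
value of type `A` and calls no operations. -/
theorem progress_pure {σ : Sig} (Ω : OpSig σ) [DecidableEq σ.Inst] [DecidableEq σ.Op]
    (c : Comp σ) (A : PType σ)
    (h : HasTypeC σ Ω [] c (.bang A (∅ : Finset (σ.Inst × σ.Op)))) :
    ((∃ c', Step Ω c c') ∨ (∃ e, c = .ret e ∧ HasTypeE σ Ω [] e A)) ∧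
    (∀ r, StarStep Ω c r → ∃ e, r = .ret e ∧ HasTypeE σ Ω [] e A) :=
  progress_pure' Ω c A h

end CoreEff
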